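/- Let $P(z) = c\prod_{j=1}^n(z-z_j)$ be a degree-$n$ polynomial with all zeros in $|z| \le 1$, and let $\gamma = (\gamma_1,\dots,\gamma_n)$ be nonnegative reals, not all zero, with sum $\Lambda$ and minimum $\gamma_m$. Define $P^\gamma(z) = c\sum_{j=1}^n \gamma_j\prod_{i\ne j}(z-z_i)$ and the generalized polar derivative $D_\alpha^\gamma[P](z) = \Lambda P(z) + (\alpha - z)P^\gamma(z)$. Then for every $\alpha \in \mathbb{C}$ with $|\alpha| \ge 1$, $\max_{|z|=1} |D_\alpha^\gamma[P](z)| \ge \frac{|\alpha|-1}{2}\left(\Lambda + \gamma_m\cdot\frac{|a_n|-|a_0|}{|a_n|+|a_0|}\right)\max_{|z|=1}|P(z)|$, where $a_n$ and $a_0$ are the leading coefficient and constant term of $P$. -/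

import Mathlib

open Complex Polynomial Finset

lemma two_var_ineq (a b : ℝ) (ha0 : 0 ≤ a) (ha1 : a ≤ 1) (hb0 : 0 ≤ b) (hb1 : b ≤ 1) :
    (1 - a*b)/(1+a*b) ≤ (1-a)/(1+a) + (1-b)/(1+b) := by
  have h1 : (0:ℝ) < 1 + a := by linarith
  have h2 : (0:ℝ) < 1 + b := by linarith
  have h3 : (0:ℝ) < 1 + a*b := by nlinarith
  rw [div_add_div _ _ (ne_of_gt h1) (ne_of_gt h2), div_le_div_iff₀ h3 (by positivity)]
  have hab : a*b ≤ 1 := by nlinarith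
  nlinarith [mul_nonneg (mul_nonneg (sub_nonneg.mpr hab) (sub_nonneg.mpr ha1)) (sub_nonneg.mpr hb1)]

lemma prod_sum_ineq {ι : Type*} (s : Finset ι) (t : ι → ℝ)
    (h : ∀ j ∈ s, 0 ≤ t j ∧ t j ≤ 1) :
    (1 - ∏ j ∈ s, t j)/(1 + ∏ j ∈ s, t j) ≤ ∑ j ∈ s, (1 - t j)/(1 + t j) := by
  induction s using Finset.cons_induction with
  | empty => simp
  | cons a s ha ih =>
    rw [Finset.prod_cons, Finset.sum_cons]
    have hs0 : 0 ≤ ∏ j ∈ s, t j := Finset.prod_nonneg fun j hj => (h j (Finset.mem_cons_of_mem hj)).1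
    have hs1 : ∏ j ∈ s, t j ≤ 1 :=
      Finset.prod_le_one (fun j hj => (h j (Finset.mem_cons_of_mem hj)).1)
        (fun j hj => (h j (Finset.mem_cons_of_mem hj)).2)
    have ha0 := (h a (Finset.mem_cons_self a s)).1
    have ha1 := (h a (Finset.mem_cons_self a s)).2
    calc (1 - t a * ∏ j ∈ s, t j)/(1 + t a * ∏ j ∈ s, t j)
        ≤ (1 - t a)/(1 + t a) + (1 - ∏ j ∈ s, t j)/(1 + ∏ j ∈ s, t j) :=
          two_var_ineq _ _ ha0 ha1 hs0 hs1
      _ ≤ (1 - t a)/(1 + t a) + ∑ j ∈ s, (1 - t j)/(1 + t j) := by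
          gcongr
          exact ih fun j hj => h j (Finset.mem_cons_of_mem hj)

lemma re_key (w ζ : ℂ) (hw : ‖w‖ = 1) (hζ : ‖ζ‖ ≤ 1) (hne : w - ζ ≠ 0) :
    1/(1+‖ζ‖) ≤ (w / (w - ζ)).re := by
  set t := ‖ζ‖ with hts
  have ht0 : 0 ≤ t := norm_nonneg _
  have hw2 : w.re^2 + w.im^2 = 1 := by
    have := Complex.sq_norm w
    rw [Complex.normSq_apply] at this
    rw [hw] at this; nlinarith
  have hz2 : ζ.re^2 + ζ.im^2 = t^2 := by
    have := Complex.sq_norm ζ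
    rw [Complex.normSq_apply] at this
    rw [← hts] at this
    nlinarith
  have hns : Complex.normSq (w - ζ) = (w.re - ζ.re)^2 + (w.im - ζ.im)^2 := by
    rw [Complex.normSq_apply]; simp [Complex.sub_re, Complex.sub_im]; ring
  have hnspos : 0 < Complex.normSq (w - ζ) := Complex.normSq_pos.mpr hne
  have hre : (w / (w - ζ)).re =
      (w.re * (w.re - ζ.re) + w.im * (w.im - ζ.im)) / Complex.normSq (w - ζ) := by
    rw [Complex.div_re]
    simp [Complex.sub_re, Complex.sub_im]
    ring
  rw [hre]
  set r := w.re * ζ.re + w.im * ζ.im with hr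
  have hr2 : r^2 ≤ t^2 := by nlinarith [sq_nonneg (w.re*ζ.im - w.im*ζ.re)]
  have hrt : -t ≤ r := by nlinarith [sq_nonneg (r + t)]
  rw [div_le_div_iff₀ (by positivity) hnspos]
  nlinarith [mul_nonneg (sub_nonneg.mpr hζ) (by linarith : (0:ℝ) ≤ t + r)]

theorem stmt_8 (n : ℕ) (hn : 0 < n) (c : ℂ) (hc : c ≠ 0) (z : Fin n → ℂ)
    (hz : ∀ j, ‖z j‖ ≤ 1)
    (γ : Fin n → ℝ) (hγ : ∀ j, 0 ≤ γ j) (hγ0 : ∃ j, γ j ≠ 0)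
    (γm : ℝ) (hγm : IsLeast (Set.range γ) γm)
    (P : Polynomial ℂ) (hP : P = Polynomial.C c * ∏ j, (Polynomial.X - Polynomial.C (z j)))
    (Pγ : Polynomial ℂ)
    (hPγ : Pγ = Polynomial.C c * ∑ j, Polynomial.C (γ j : ℂ) *
      ∏ i ∈ Finset.univ.erase j, (Polynomial.X - Polynomial.C (z i)))
    (α : ℂ) (hα : 1 ≤ ‖α‖)
    (D : Polynomial ℂ)
    (hD : D = Polynomial.C ((∑ j, γ j : ℝ) : ℂ) * P + (Polynomial.C α - Polynomial.X) * Pγ) :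
    (‖α‖ - 1) / 2 *
        ((∑ j, γ j) + γm * ((‖c‖ - ‖P.coeff 0‖) / (‖c‖ + ‖P.coeff 0‖))) *
        (⨆ w : Metric.sphere (0 : ℂ) 1, ‖P.eval (w : ℂ)‖) ≤
      ⨆ w : Metric.sphere (0 : ℂ) 1, ‖D.eval (w : ℂ)‖ := by
  have hΛ0 : 0 ≤ ∑ j, γ j := Finset.sum_nonneg fun j _ => hγ j
  have hγmle : ∀ j, γm ≤ γ j := fun j => hγm.2 (Set.mem_range_self j)
  obtain ⟨j0, hj0⟩ := hγm.1
  have hγm0 : 0 ≤ γm := hj0 ▸ hγ j0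
  have hcpos : 0 < ‖c‖ := norm_pos_iff.mpr hc
  -- norm of constant coefficient
  have hT0 : 0 ≤ ∏ j, ‖z j‖ := Finset.prod_nonneg fun j _ => norm_nonneg _
  have hT1 : ∏ j, ‖z j‖ ≤ 1 :=
    Finset.prod_le_one (fun j _ => norm_nonneg _) (fun j _ => hz j)
  have ha0 : ‖P.coeff 0‖ = ‖c‖ * ∏ j, ‖z j‖ := by
    rw [Polynomial.coeff_zero_eq_eval_zero, hP]
    simp only [Polynomial.eval_mul, Polynomial.eval_C, Polynomial.eval_prod,
      Polynomial.eval_sub, Polynomial.eval_X, zero_sub]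
    rw [norm_mul, norm_prod]
    simp [norm_neg]
  have hRval : (‖c‖ - ‖P.coeff 0‖) / (‖c‖ + ‖P.coeff 0‖)
      = (1 - ∏ j, ‖z j‖) / (1 + ∏ j, ‖z j‖) := by
    rw [ha0, show ‖c‖ - ‖c‖ * ∏ j, ‖z j‖ = ‖c‖ * (1 - ∏ j, ‖z j‖) by ring,
      show ‖c‖ + ‖c‖ * ∏ j, ‖z j‖ = ‖c‖ * (1 + ∏ j, ‖z j‖) by ring,
      mul_div_mul_left _ _ (ne_of_gt hcpos)]
  have hR0 : 0 ≤ (‖c‖ - ‖P.coeff 0‖) / (‖c‖ + ‖P.coeff 0‖) := by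
    rw [hRval]; apply div_nonneg <;> linarith
  -- pointwise bound
  have hpoint : ∀ w : ℂ, ‖w‖ = 1 →
      (‖α‖ - 1) / 2 * ((∑ j, γ j) + γm * ((‖c‖ - ‖P.coeff 0‖) / (‖c‖ + ‖P.coeff 0‖)))
        * ‖P.eval w‖ ≤ ‖D.eval w‖ := by
    intro w hw
    by_cases hPw : P.eval w = 0
    · rw [hPw, norm_zero, mul_zero]; positivity
    · have hPev : P.eval w = c * ∏ j, (w - z j) := by
        simp [hP, Polynomial.eval_prod]
      have hfac : ∀ j, w - z j ≠ 0 := by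
        intro j hj
        apply hPw
        rw [hPev]
        exact mul_eq_zero_of_right c (Finset.prod_eq_zero (Finset.mem_univ j) hj)
      set Q : ℂ := ∑ j, (γ j : ℂ) * (w - z j)⁻¹ with hQ
      have herase : ∀ j, (∏ i ∈ Finset.univ.erase j, (w - z i))
          = (∏ i, (w - z i)) * (w - z j)⁻¹ := by
        intro j
        rw [eq_mul_inv_iff_mul_eq₀ (hfac j)]
        exact Finset.prod_erase_mul _ _ (Finset.mem_univ j)
      have hPγev : Pγ.eval w = P.eval w * Q := by
        rw [hPγ]
        simp only [Polynomial.eval_mul, Polynomial.eval_C, Polynomial.eval_finset_sum,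
          Polynomial.eval_prod, Polynomial.eval_sub, Polynomial.eval_X]
        rw [hPev, hQ, Finset.mul_sum, Finset.mul_sum]
        apply Finset.sum_congr rfl
        intro j _
        rw [herase j]
        ring
      -- real part estimate
      have hterm : ∀ j, γ j / 2 + γm * ((1 - ‖z j‖) / (1 + ‖z j‖)) / 2
          ≤ γ j * (w / (w - z j)).re := by
        intro j
        have ht0 : (0:ℝ) ≤ ‖z j‖ := norm_nonneg _
        have h1 : 1 / (1 + ‖z j‖) ≤ (w / (w - z j)).re := re_key w (z j) hw (hz j) (hfac j)
        have h2 : γ j * (1 / (1 + ‖z j‖)) ≤ γ j * (w / (w - z j)).re :=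
          mul_le_mul_of_nonneg_left h1 (hγ j)
        have h3 : γ j * (1 / (1 + ‖z j‖))
            = γ j / 2 + γ j * ((1 - ‖z j‖) / (1 + ‖z j‖)) / 2 := by
          field_simp
          ring
        have h4 : 0 ≤ (1 - ‖z j‖) / (1 + ‖z j‖) := by
          apply div_nonneg <;> linarith [hz j]
        nlinarith [mul_le_mul_of_nonneg_right (hγmle j) h4]
      have hresum : (w * Q).re = ∑ j, γ j * (w / (w - z j)).re := by
        have hwQ : w * Q = ∑ j, (γ j : ℂ) * (w / (w - z j)) := by
          rw [hQ, Finset.mul_sum]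
          apply Finset.sum_congr rfl
          intro j _
          rw [div_eq_mul_inv]
          ring
        rw [hwQ, Complex.re_sum]
        apply Finset.sum_congr rfl
        intro j _
        simp [Complex.mul_re, Complex.ofReal_re, Complex.ofReal_im]
      have hprodsum : (1 - ∏ j, ‖z j‖) / (1 + ∏ j, ‖z j‖)
          ≤ ∑ j, (1 - ‖z j‖) / (1 + ‖z j‖) :=
        prod_sum_ineq Finset.univ _ (fun j _ => ⟨norm_nonneg _, hz j⟩)
      have hre : (∑ j, γ j) / 2
            + γm * ((‖c‖ - ‖P.coeff 0‖) / (‖c‖ + ‖P.coeff 0‖)) / 2 ≤ (w * Q).re := by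
        rw [hresum]
        have := Finset.sum_le_sum (s := Finset.univ) (fun j _ => hterm j)
        rw [Finset.sum_add_distrib, ← Finset.sum_div, ← Finset.sum_div, ← Finset.mul_sum]
          at this
        rw [hRval]
        nlinarith [mul_le_mul_of_nonneg_left hprodsum hγm0]
      have hre2 : (∑ j, γ j) / 2 ≤ (w * Q).re := by
        nlinarith [mul_nonneg hγm0 hR0]
      have hQnorm : (∑ j, γ j) / 2
            + γm * ((‖c‖ - ‖P.coeff 0‖) / (‖c‖ + ‖P.coeff 0‖)) / 2 ≤ ‖Q‖ := by
        have h1 : (w * Q).re ≤ ‖w * Q‖ := by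
          exact Complex.re_le_norm _
        have h2 : ‖w * Q‖ = ‖Q‖ := by rw [norm_mul, hw, one_mul]
        linarith
      have h4 : ‖((∑ j, γ j : ℝ) : ℂ) - w * Q‖ ≤ ‖w * Q‖ := by
        have hsq : Complex.normSq (((∑ j, γ j : ℝ) : ℂ) - w * Q)
            ≤ Complex.normSq (w * Q) := by
          simp only [Complex.normSq_apply, Complex.sub_re, Complex.sub_im,
            Complex.ofReal_re, Complex.ofReal_im]
          nlinarith [hre2, hΛ0]
        rw [Complex.norm_def, Complex.norm_def]
        exact Real.sqrt_le_sqrt hsq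
      have h6 : D.eval w = P.eval w * (α * Q + (((∑ j, γ j : ℝ) : ℂ) - w * Q)) := by
        rw [hD]
        simp only [Polynomial.eval_add, Polynomial.eval_mul, Polynomial.eval_sub,
          Polynomial.eval_C, Polynomial.eval_X]
        rw [hPγev]
        ring
      have h4' : ‖((∑ j, γ j : ℝ) : ℂ) - w * Q‖ ≤ ‖Q‖ := by
        rw [norm_mul, hw, one_mul] at h4; exact h4
      have h7 : ‖α‖ * ‖Q‖ ≤ ‖α * Q + (((∑ j, γ j : ℝ) : ℂ) - w * Q)‖
          + ‖((∑ j, γ j : ℝ) : ℂ) - w * Q‖ := by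
        have := norm_sub_le (α * Q + (((∑ j, γ j : ℝ) : ℂ) - w * Q))
          (((∑ j, γ j : ℝ) : ℂ) - w * Q)
        rw [add_sub_cancel_right, norm_mul] at this
        exact this
      calc (‖α‖ - 1) / 2 * ((∑ j, γ j) + γm * ((‖c‖ - ‖P.coeff 0‖) / (‖c‖ + ‖P.coeff 0‖)))
            * ‖P.eval w‖
          ≤ (‖α‖ - 1) * ‖Q‖ * ‖P.eval w‖ := by
            apply mul_le_mul_of_nonneg_right _ (norm_nonneg _)
            have h8 : (0:ℝ) ≤ ‖α‖ - 1 := by linarith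
            calc (‖α‖ - 1) / 2 * ((∑ j, γ j) + γm * ((‖c‖ - ‖P.coeff 0‖) / (‖c‖ + ‖P.coeff 0‖)))
                = (‖α‖ - 1) * ((∑ j, γ j) / 2
                    + γm * ((‖c‖ - ‖P.coeff 0‖) / (‖c‖ + ‖P.coeff 0‖)) / 2) := by ring
              _ ≤ (‖α‖ - 1) * ‖Q‖ := mul_le_mul_of_nonneg_left hQnorm h8
        _ = ‖P.eval w‖ * (‖α‖ * ‖Q‖ - ‖Q‖) := by ring
        _ ≤ ‖P.eval w‖ * ‖α * Q + (((∑ j, γ j : ℝ) : ℂ) - w * Q)‖ := by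
            apply mul_le_mul_of_nonneg_left _ (norm_nonneg _)
            linarith
        _ = ‖D.eval w‖ := by rw [h6, norm_mul]
  -- pass to suprema
  haveI : Nonempty (Metric.sphere (0 : ℂ) 1) :=
    ⟨⟨1, by simp [Metric.mem_sphere, Complex.dist_eq]⟩⟩
  haveI : CompactSpace (Metric.sphere (0 : ℂ) 1) :=
    isCompact_iff_compactSpace.mp (isCompact_sphere 0 1)
  have contP : Continuous fun w : Metric.sphere (0 : ℂ) 1 => ‖P.eval (w : ℂ)‖ :=
    (P.continuous.comp continuous_subtype_val).norm
  have contD : Continuous fun w : Metric.sphere (0 : ℂ) 1 => ‖D.eval (w : ℂ)‖ :=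
    (D.continuous.comp continuous_subtype_val).norm
  obtain ⟨w0, -, hw0⟩ := isCompact_univ.exists_isMaxOn Set.univ_nonempty contP.continuousOn
  rw [isMaxOn_iff] at hw0
  have hbddD : BddAbove (Set.range fun w : Metric.sphere (0 : ℂ) 1 => ‖D.eval (w : ℂ)‖) :=
    (isCompact_range contD).bddAbove
  have hsupP : (⨆ w : Metric.sphere (0 : ℂ) 1, ‖P.eval (w : ℂ)‖) = ‖P.eval (w0 : ℂ)‖ :=
    le_antisymm (ciSup_le fun w => hw0 w (Set.mem_univ w))
      (le_ciSup (isCompact_range contP).bddAbove w0)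
  have hw0n : ‖(w0 : ℂ)‖ = 1 := by
    have := w0.2
    rwa [mem_sphere_zero_iff_norm] at this
  calc (‖α‖ - 1) / 2 *
        ((∑ j, γ j) + γm * ((‖c‖ - ‖P.coeff 0‖) / (‖c‖ + ‖P.coeff 0‖))) *
        (⨆ w : Metric.sphere (0 : ℂ) 1, ‖P.eval (w : ℂ)‖)
      = (‖α‖ - 1) / 2 *
        ((∑ j, γ j) + γm * ((‖c‖ - ‖P.coeff 0‖) / (‖c‖ + ‖P.coeff 0‖))) *
        ‖P.eval (w0 : ℂ)‖ := by rw [hsupP]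
    _ ≤ ‖D.eval (w0 : ℂ)‖ := hpoint _ hw0n
    _ ≤ ⨆ w : Metric.sphere (0 : ℂ) 1, ‖D.eval (w : ℂ)‖ := le_ciSup hbddD w0
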